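/- Fix d,r,t∈ℕ and p∈[1,∞]. Let μ⃗=(μ^1,…,μ^t) be a vector of finite complex Borel measures on ℝ^d, let Φ=(φ^1,…,φ^r) with each φ^i∈W₀^1 satisfy the Riesz condition for p, and let X={x_j : j∈J} be a separated μ⃗-sampling set for V^p(Φ). Then there exists ε₀>0 such that for every vector α⃗=(α^1,…,α^t) of finite complex Borel measures with ‖μ⃗−α⃗‖<ε₀, X is an α⃗-sampling set for V^p(Φ); that is, there exist 0<A'_p≤B'_p<∞ with A'_p‖f‖_{L^p} ≤ ∑_{l=1}^t ‖((f∗α^l)(x_j))_{j∈J}‖_{ℓ^p(J)} ≤ B'_p‖f‖_{L^p} for all f∈V^p(Φ). -/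

import Mathlib

open MeasureTheory ENNReal

noncomputable section

abbrev Euc (d : ℕ) := EuclideanSpace ℝ (Fin d)

/-- Embedding of `ℤ^d` into `ℝ^d`. -/
def zemb {d : ℕ} (k : Fin d → ℤ) : Euc d := WithLp.toLp 2 (fun i => (k i : ℝ))

/-- `ess sup_{x ∈ [0,1]^d} |f(x+k)|`, valued in `ℝ≥0∞`. -/
def cubeSup {d : ℕ} (f : Euc d → ℂ) (k : Fin d → ℤ) : ℝ≥0∞ :=
  essSup (fun x => (‖f (x + zemb k)‖₊ : ℝ≥0∞))
    (volume.restrict {x : Euc d | ∀ i, x i ∈ Set.Icc (0:ℝ) 1})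

/-- The Wiener amalgam norm `‖f‖_{W^p}`. -/
def WNorm {d : ℕ} (p : ℝ≥0∞) (f : Euc d → ℂ) : ℝ≥0∞ :=
  if p = ∞ then ⨆ k : Fin d → ℤ, cubeSup f k
  else (∑' k : Fin d → ℤ, cubeSup f k ^ p.toReal) ^ (1 / p.toReal)

/-- Membership in `W₀^1`: continuous with finite `W^1` norm. -/
def MemW01 {d : ℕ} (f : Euc d → ℂ) : Prop := Continuous f ∧ WNorm 1 f < ∞

/-- `(W^1)^{(r)}` norm of a vector of functions. -/
def WNormVec {d r : ℕ} (Φ : Fin r → Euc d → ℂ) : ℝ≥0∞ := ∑ i, WNorm 1 (Φ i)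

/-- the `ℓ^p` norm of a family of complex numbers, valued in `ℝ≥0∞`. -/
def lpNorm {ι : Type*} (p : ℝ≥0∞) (c : ι → ℂ) : ℝ≥0∞ :=
  if p = ∞ then ⨆ j, (‖c j‖₊ : ℝ≥0∞)
  else (∑' j, (‖c j‖₊ : ℝ≥0∞) ^ p.toReal) ^ (1 / p.toReal)

/-- The `(ℓ^p(ℤ^d))^{(r)}` norm `‖C‖ = ∑_i ‖c^i‖_{ℓ^p}`. -/
def vlpNorm {d r : ℕ} (p : ℝ≥0∞) (C : Fin r → (Fin d → ℤ) → ℂ) : ℝ≥0∞ :=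
  ∑ i, lpNorm p (C i)

/-- `f_C = ∑_{k ∈ ℤ^d} ∑_i c^i(k) φ^i(· - k)`. -/
def genFun {d r : ℕ} (Φ : Fin r → Euc d → ℂ) (C : Fin r → (Fin d → ℤ) → ℂ)
    (x : Euc d) : ℂ :=
  ∑' k : Fin d → ℤ, ∑ i, C i k * Φ i (x - zemb k)

/-- Integral of a complex-valued function against a finite complex Borel measure,
via the Jordan decompositions of the real and imaginary parts. -/
def cInt {d : ℕ} (μ : ComplexMeasure (Euc d)) (f : Euc d → ℂ) : ℂ :=
  ((∫ x, f x ∂(ComplexMeasure.re μ).toJordanDecomposition.posPart) -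
    (∫ x, f x ∂(ComplexMeasure.re μ).toJordanDecomposition.negPart)) +
  Complex.I * ((∫ x, f x ∂(ComplexMeasure.im μ).toJordanDecomposition.posPart) -
    (∫ x, f x ∂(ComplexMeasure.im μ).toJordanDecomposition.negPart))

/-- The convolution `(φ ∗ μ)(x) = ∫ φ(x - y) dμ(y)`. -/
def mconv {d : ℕ} (μ : ComplexMeasure (Euc d)) (φ : Euc d → ℂ) (x : Euc d) : ℂ :=
  cInt μ (fun y => φ (x - y))

/-- The total variation norm `|μ|(ℝ^d)` of a finite complex Borel measure, as the
supremum of `∑ ‖μ(S_i)‖` over finite disjoint families of measurable sets. -/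
def cmNorm {d : ℕ} (μ : ComplexMeasure (Euc d)) : ℝ≥0∞ :=
  ⨆ (n : ℕ) (S : Fin n → Set (Euc d)) (_ : ∀ i, MeasurableSet (S i))
    (_ : Pairwise (Function.onFun Disjoint S)), ∑ i, (‖μ (S i)‖₊ : ℝ≥0∞)

/-- norm of a vector of complex measures. -/
def cmNormVec {d t : ℕ} (μ : Fin t → ComplexMeasure (Euc d)) : ℝ≥0∞ :=
  ∑ l, cmNorm (μ l)

/-- The Riesz condition with explicit constants. -/
def RieszWith {d r : ℕ} (p : ℝ≥0∞) (Φ : Fin r → Euc d → ℂ) (m M : ℝ) : Prop :=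
  0 < m ∧ m ≤ M ∧ ∀ C : Fin r → (Fin d → ℤ) → ℂ, vlpNorm p C < ∞ →
    ENNReal.ofReal m * vlpNorm p C ≤ eLpNorm (genFun Φ C) p volume ∧
    eLpNorm (genFun Φ C) p volume ≤ ENNReal.ofReal M * vlpNorm p C

/-- The Riesz (unconditional basis) condition for `p`. -/
def RieszCond {d r : ℕ} (p : ℝ≥0∞) (Φ : Fin r → Euc d → ℂ) : Prop :=
  ∃ m M : ℝ, RieszWith p Φ m M

/-- `X` is a `μ⃗`-sampling set for `V^p(Φ)`. -/
def SamplingSet {d r t : ℕ} {J : Type*} (p : ℝ≥0∞) (Φ : Fin r → Euc d → ℂ)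
    (μ : Fin t → ComplexMeasure (Euc d)) (X : J → Euc d) : Prop :=
  ∃ A B : ℝ, 0 < A ∧ A ≤ B ∧ ∀ C : Fin r → (Fin d → ℤ) → ℂ, vlpNorm p C < ∞ →
    ENNReal.ofReal A * eLpNorm (genFun Φ C) p volume ≤
      ∑ l, lpNorm p (fun j => mconv (μ l) (genFun Φ C) (X j)) ∧
    ∑ l, lpNorm p (fun j => mconv (μ l) (genFun Φ C) (X j)) ≤
      ENNReal.ofReal B * eLpNorm (genFun Φ C) p volume

/-- `X` is separated with constant `δ`. -/
def SeparatedWith {d : ℕ} {J : Type*} (X : J → Euc d) (δ : ℝ) : Prop :=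
  ∀ i j : J, i ≠ j → δ ≤ dist (X i) (X j)

def SeparatedSet {d : ℕ} {J : Type*} (X : J → Euc d) : Prop :=
  ∃ δ : ℝ, 0 < δ ∧ SeparatedWith X δ

/-- Membership in `M_s(ℝ^d)`: `∫ (1+|x|)^s d|μ| < ∞`, expressed via the Jordan
decompositions of the real and imaginary parts. -/
def MemMs {d : ℕ} (s : ℝ) (μ : ComplexMeasure (Euc d)) : Prop :=
  (∫⁻ x, ENNReal.ofReal ((1 + ‖x‖) ^ s) ∂(ComplexMeasure.re μ).toJordanDecomposition.posPart < ∞) ∧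
  (∫⁻ x, ENNReal.ofReal ((1 + ‖x‖) ^ s) ∂(ComplexMeasure.re μ).toJordanDecomposition.negPart < ∞) ∧
  (∫⁻ x, ENNReal.ofReal ((1 + ‖x‖) ^ s) ∂(ComplexMeasure.im μ).toJordanDecomposition.posPart < ∞) ∧
  (∫⁻ x, ENNReal.ofReal ((1 + ‖x‖) ^ s) ∂(ComplexMeasure.im μ).toJordanDecomposition.negPart < ∞)

/-- `Φ ∈ W_s`: an `s`-localized Riesz generator. -/
def MemWs {d r : ℕ} (s : ℝ) (Φ : Fin r → Euc d → ℂ) : Prop :=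
  (∀ i, MemW01 (Φ i)) ∧ RieszCond 2 Φ ∧
    ∀ i, ∃ C0 : ℝ, 0 < C0 ∧ ∀ x : Euc d, ‖Φ i x‖ ≤ C0 * (1 + ‖x‖) ^ (-s)

end
noncomputable section StabilityAux

open MeasureTheory ENNReal NNReal Metric Set

/-! ### A generic `ℓ^p`-type norm on `ℝ≥0∞`-valued families -/

/-- generic `ℓ^p` norm of an `ℝ≥0∞`-valued family. -/
def myLp {ι : Type*} (p : ℝ≥0∞) (a : ι → ℝ≥0∞) : ℝ≥0∞ :=
  if p = ∞ then ⨆ k, a k else (∑' k, a k ^ p.toReal) ^ (1 / p.toReal)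

lemma lpNorm_eq_myLp {ι : Type*} (p : ℝ≥0∞) (c : ι → ℂ) :
    lpNorm p c = myLp p (fun j => (‖c j‖₊ : ℝ≥0∞)) := rfl

lemma WNorm_eq_myLp {d : ℕ} (p : ℝ≥0∞) (f : Euc d → ℂ) :
    WNorm p f = myLp p (cubeSup f) := rfl

lemma toReal_pos_of_one_le {p : ℝ≥0∞} (hp : 1 ≤ p) (hp' : p ≠ ∞) : 0 < p.toReal := by
  have : (1 : ℝ≥0∞).toReal ≤ p.toReal := ENNReal.toReal_mono hp' hp
  simpa using lt_of_lt_of_le one_pos this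

lemma one_le_toReal_of_one_le {p : ℝ≥0∞} (hp : 1 ≤ p) (hp' : p ≠ ∞) : 1 ≤ p.toReal := by
  have : (1 : ℝ≥0∞).toReal ≤ p.toReal := ENNReal.toReal_mono hp' hp
  simpa using this

lemma myLp_mono {ι : Type*} {p : ℝ≥0∞} {a b : ι → ℝ≥0∞} (h : ∀ k, a k ≤ b k) :
    myLp p a ≤ myLp p b := by
  unfold myLp
  split_ifs
  · exact iSup_mono fun k => h k
  · refine ENNReal.rpow_le_rpow (ENNReal.tsum_le_tsum fun k => ?_) (by positivity)
    exact ENNReal.rpow_le_rpow (h k) ENNReal.toReal_nonneg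

lemma le_myLp {ι : Type*} {p : ℝ≥0∞} (hp : 1 ≤ p) (a : ι → ℝ≥0∞) (k : ι) :
    a k ≤ myLp p a := by
  unfold myLp
  split_ifs with h
  · exact le_iSup a k
  · have hq : 0 < p.toReal := toReal_pos_of_one_le hp h
    calc a k = (a k ^ p.toReal) ^ (1 / p.toReal) := by
          rw [← ENNReal.rpow_mul, mul_one_div_cancel hq.ne', ENNReal.rpow_one]
      _ ≤ (∑' k, a k ^ p.toReal) ^ (1 / p.toReal) :=
          ENNReal.rpow_le_rpow (ENNReal.le_tsum k) (by positivity)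

lemma myLp_comp_equiv {ι ι' : Type*} {p : ℝ≥0∞} (a : ι → ℝ≥0∞) (e : ι' ≃ ι) :
    myLp p (fun k => a (e k)) = myLp p a := by
  unfold myLp
  split_ifs
  · exact le_antisymm (iSup_le fun k => le_iSup a (e k))
      (iSup_le fun k => le_iSup_of_le (e.symm k) (by simp))
  · rw [e.tsum_eq (fun k => a k ^ p.toReal)]

lemma myLp_const_mul {ι : Type*} {p : ℝ≥0∞} (hp : 1 ≤ p) (c : ℝ≥0∞) (a : ι → ℝ≥0∞) :
    myLp p (fun k => c * a k) = c * myLp p a := by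
  unfold myLp
  split_ifs with h
  · rw [ENNReal.mul_iSup]
  · have hq : 0 < p.toReal := toReal_pos_of_one_le hp h
    have : ∀ k, (c * a k) ^ p.toReal = c ^ p.toReal * a k ^ p.toReal := fun k =>
      ENNReal.mul_rpow_of_nonneg _ _ ENNReal.toReal_nonneg
    simp_rw [this, ENNReal.tsum_mul_left]
    rw [ENNReal.mul_rpow_of_nonneg _ _ (by positivity), ← ENNReal.rpow_mul,
      mul_one_div_cancel hq.ne', ENNReal.rpow_one]

/-- countable Minkowski inequality for `myLp`. -/
lemma myLp_tsum_le {ι β : Type*} [Countable β] {p : ℝ≥0∞} (hp : 1 ≤ p) (g : β → ι → ℝ≥0∞) :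
    myLp p (fun k => ∑' m, g m k) ≤ ∑' m, myLp p (g m) := by
  classical
  rcases eq_or_ne p ∞ with hP | hP
  · subst hP
    simp only [myLp, if_pos rfl]
    refine iSup_le fun k => ENNReal.tsum_le_tsum fun m => le_iSup (g m) k
  · have hq1 : 1 ≤ p.toReal := one_le_toReal_of_one_le hp hP
    have hq : 0 < p.toReal := lt_of_lt_of_le one_pos hq1
    set q := p.toReal with hqdef
    letI : MeasurableSpace ι := ⊤
    haveI : MeasurableSingletonClass ι := ⟨fun _ => trivial⟩
    have hms : ∀ f : ι → ℝ≥0∞, Measurable f := fun f s _ => trivial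
    have hcount : ∀ f : ι → ℝ≥0∞, ∑' k, f k = ∫⁻ k, f k ∂(Measure.count) := fun f =>
      (lintegral_count' (hms f)).symm
    have hrpow_mono : Monotone (fun x : ℝ≥0∞ => x ^ q) := fun x y hxy =>
      ENNReal.rpow_le_rpow hxy hq.le
    have hrpow_bot : (fun x : ℝ≥0∞ => x ^ q) ⊥ = ⊥ := by
      simp [ENNReal.zero_rpow_of_pos hq]
    -- finite Minkowski
    have fin : ∀ s : Finset β,
        (∫⁻ k, (∑ m ∈ s, g m k) ^ q ∂(Measure.count)) ^ (1 / q) ≤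
          ∑ m ∈ s, (∫⁻ k, (g m k) ^ q ∂(Measure.count)) ^ (1 / q) := by
      intro s
      induction s using Finset.induction_on with
      | empty =>
        simp [ENNReal.zero_rpow_of_pos hq, ENNReal.zero_rpow_of_pos (one_div_pos.mpr hq), hq]
      | insert a s hnot ih =>
        simp only [Finset.sum_insert hnot]
        refine le_trans (ENNReal.lintegral_Lp_add_le ((hms _).aemeasurable)
          ((hms _).aemeasurable) hq1) ?_
        exact add_le_add le_rfl ih
    -- directed supremum
    have hdir : Directed (· ≤ ·) (fun s : Finset β => fun k => (∑ m ∈ s, g m k) ^ q) := by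
      refine (Monotone.directed_le ?_)
      intro s s' hss k
      exact hrpow_mono (Finset.sum_le_sum_of_subset hss)
    calc myLp p (fun k => ∑' m, g m k)
        = (∑' k, (∑' m, g m k) ^ q) ^ (1 / q) := by simp [myLp, hP, hqdef]
      _ = (∑' k, (⨆ s : Finset β, ∑ m ∈ s, g m k) ^ q) ^ (1 / q) := by
          simp_rw [ENNReal.tsum_eq_iSup_sum]
      _ = (∫⁻ k, ⨆ s : Finset β, (∑ m ∈ s, g m k) ^ q ∂(Measure.count)) ^ (1 / q) := by
          rw [← hcount]; congr 1; refine tsum_congr fun k => ?_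
          exact Monotone.map_iSup_of_continuousAt
            (ENNReal.continuous_rpow_const.continuousAt) hrpow_mono hrpow_bot
      _ = (⨆ s : Finset β, ∫⁻ k, (∑ m ∈ s, g m k) ^ q ∂(Measure.count)) ^ (1 / q) := by
          rw [lintegral_iSup_directed (fun s => (hms _).aemeasurable) hdir]
      _ = ⨆ s : Finset β, (∫⁻ k, (∑ m ∈ s, g m k) ^ q ∂(Measure.count)) ^ (1 / q) := by
          have : Monotone (fun x : ℝ≥0∞ => x ^ (1 / q)) := fun x y hxy =>
            ENNReal.rpow_le_rpow hxy (by positivity)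
          refine Monotone.map_iSup_of_continuousAt
            (ENNReal.continuous_rpow_const.continuousAt) this ?_
          simp [ENNReal.zero_rpow_of_pos (one_div_pos.mpr hq), hq]
      _ ≤ ⨆ s : Finset β, ∑ m ∈ s, (∫⁻ k, (g m k) ^ q ∂(Measure.count)) ^ (1 / q) :=
          iSup_mono fin
      _ ≤ ∑' m, myLp p (g m) := by
          refine iSup_le fun s => ?_
          have : ∀ m, (∫⁻ k, (g m k) ^ q ∂(Measure.count)) ^ (1 / q) = myLp p (g m) := by
            intro m; simp [myLp, hP, ← hcount, hqdef]
          simp_rw [this]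
          exact ENNReal.sum_le_tsum s

lemma myLp_sum_le {ι β : Type*} [Fintype β] {p : ℝ≥0∞} (hp : 1 ≤ p) (g : β → ι → ℝ≥0∞) :
    myLp p (fun k => ∑ m, g m k) ≤ ∑ m, myLp p (g m) := by
  have := myLp_tsum_le (ι := ι) (β := β) hp g
  simpa [tsum_fintype] using this

lemma myLp_add_le {ι : Type*} {p : ℝ≥0∞} (hp : 1 ≤ p) (a b : ι → ℝ≥0∞) :
    myLp p (fun k => a k + b k) ≤ myLp p a + myLp p b := by
  have := myLp_sum_le (ι := ι) (β := Bool) hp (fun m k => cond m (a k) (b k))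
  simpa [Fintype.sum_bool] using this


/-! ### Cube geometry -/

variable {d : ℕ}

/-- The unit cube. -/
def Q0 (d : ℕ) : Set (Euc d) := {x : Euc d | ∀ i, x i ∈ Set.Icc (0:ℝ) 1}

/-- coordinatewise floor. -/
def zfloor (x : Euc d) : Fin d → ℤ := fun i => ⌊x i⌋

lemma zemb_apply (k : Fin d → ℤ) (i : Fin d) : zemb k i = (k i : ℝ) := by simp [zemb]

lemma add_zemb_apply (x : Euc d) (k : Fin d → ℤ) (i : Fin d) :
    (x + zemb k) i = x i + (k i : ℝ) := by simp [zemb]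

lemma sub_zemb_apply (x : Euc d) (k : Fin d → ℤ) (i : Fin d) :
    (x - zemb k) i = x i - (k i : ℝ) := by simp [zemb]

lemma sub_apply' (x y : Euc d) (i : Fin d) : (x - y) i = x i - y i := rfl

lemma zemb_add (k m : Fin d → ℤ) : zemb (k + m) = zemb k + zemb m := by
  ext i; simp [zemb]

lemma zemb_sub (k m : Fin d → ℤ) : zemb (k - m) = zemb k - zemb m := by
  ext i; simp [zemb]

lemma abs_coord_le_dist (x y : Euc d) (i : Fin d) : |x i - y i| ≤ dist x y := by
  rw [EuclideanSpace.dist_eq]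
  have h1 : |x i - y i| = Real.sqrt (dist (x i) (y i) ^ 2) := by
    rw [Real.sqrt_sq_eq_abs, Real.dist_eq, abs_abs]
  rw [h1]
  refine Real.sqrt_le_sqrt ?_
  exact Finset.single_le_sum (f := fun j => dist (x j) (y j) ^ 2)
    (fun j _ => by positivity) (Finset.mem_univ i)

lemma cube_dist_le {x : Euc d} {k : Fin d → ℤ} (hx : ∀ i, x i - (k i : ℝ) ∈ Set.Icc (0:ℝ) 1) :
    dist x (zemb k) ≤ Real.sqrt d := by
  rw [EuclideanSpace.dist_eq]
  have : ∀ i ∈ Finset.univ, dist (x i) (zemb k i) ^ 2 ≤ 1 := by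
    intro i _
    have h := hx i
    rw [Real.dist_eq, zemb_apply]
    have h1 : |x i - (k i:ℝ)| ≤ 1 := abs_le.mpr ⟨by linarith [h.1], h.2⟩
    calc |x i - (k i:ℝ)| ^ 2 ≤ 1 ^ 2 := by
          exact pow_le_pow_left₀ (abs_nonneg _) h1 2
      _ = 1 := one_pow 2
  have hsum : ∑ i, dist (x i) (zemb k i) ^ 2 ≤ (d : ℝ) := by
    refine le_trans (Finset.sum_le_sum this) ?_
    simp
  exact Real.sqrt_le_sqrt hsum

/-- key positivity lemma: an open set containing a point of the unit cube
meets the cube in positive volume. -/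
lemma volume_inter_cube_pos {x₀ : Euc d} (hx : x₀ ∈ Q0 d) {U : Set (Euc d)}
    (hU : IsOpen U) (hxU : x₀ ∈ U) :
    0 < volume (U ∩ Q0 d) := by
  obtain ⟨ε, hε, hball⟩ := Metric.isOpen_iff.mp hU x₀ hxU
  set η := min (ε / (2 * (Real.sqrt d + 1))) (1/2) with hηdef
  have hsd : (0:ℝ) ≤ Real.sqrt d := Real.sqrt_nonneg _
  have hη : 0 < η := by
    refine lt_min (by positivity) (by norm_num)
  have hη2 : η ≤ 1/2 := min_le_right _ _
  have hkey : Real.sqrt d * η < ε := by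
    have h1 : η ≤ ε / (2 * (Real.sqrt d + 1)) := min_le_left _ _
    have h2 : Real.sqrt d * η ≤ Real.sqrt d * (ε / (2 * (Real.sqrt d + 1))) :=
      mul_le_mul_of_nonneg_left h1 hsd
    refine lt_of_le_of_lt h2 ?_
    rw [div_eq_mul_inv]
    rw [show Real.sqrt d * (ε * (2 * (Real.sqrt d + 1))⁻¹)
      = ε * (Real.sqrt d * (2 * (Real.sqrt d + 1))⁻¹) by ring]
    have h3 : Real.sqrt d * (2 * (Real.sqrt d + 1))⁻¹ < 1 := by
      rw [mul_inv_lt_iff₀ (by positivity)]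
      nlinarith
    nlinarith
  set a : Fin d → ℝ := fun i => if x₀ i + η ≤ 1 then x₀ i else x₀ i - η with hadef
  set I : Fin d → Set ℝ := fun i => Set.Icc (a i) (a i + η) with hIdef
  have hIfacts : ∀ i, ∀ y ∈ I i, y ∈ Set.Icc (0:ℝ) 1 ∧ |y - x₀ i| ≤ η := by
    intro i y hy
    obtain ⟨h1, h2⟩ := hy
    have hx₀ := hx i
    simp only [hIdef, hadef] at h1 h2
    by_cases hc : x₀ i + η ≤ 1
    · rw [if_pos hc] at h1 h2
      refine ⟨⟨by linarith [hx₀.1], by linarith⟩, abs_le.mpr ⟨by linarith, by linarith⟩⟩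
    · rw [if_neg hc] at h1 h2
      push_neg at hc
      refine ⟨⟨by linarith [hx₀.2], by linarith [hx₀.2]⟩, abs_le.mpr ⟨by linarith, by linarith⟩⟩
  set B : Set (Euc d) := {x : Euc d | ∀ i, x i ∈ I i} with hBdef
  have hBsub : B ⊆ U ∩ Q0 d := by
    intro y hy
    constructor
    · refine hball ?_
      rw [Metric.mem_ball, EuclideanSpace.dist_eq]
      have hsum : ∑ i, dist (y i) (x₀ i) ^ 2 ≤ (d : ℝ) * η ^ 2 := by
        have : ∀ i ∈ Finset.univ, dist (y i) (x₀ i) ^ 2 ≤ η ^ 2 := by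
          intro i _
          rw [Real.dist_eq]
          exact pow_le_pow_left₀ (abs_nonneg _) ((hIfacts i _ (hy i)).2) 2
        calc ∑ i, dist (y i) (x₀ i) ^ 2 ≤ ∑ _i : Fin d, η ^ 2 := Finset.sum_le_sum this
          _ = (d:ℝ) * η ^ 2 := by simp [Finset.sum_const, Finset.card_univ, nsmul_eq_mul]
      calc Real.sqrt (∑ i, dist (y i) (x₀ i) ^ 2) ≤ Real.sqrt ((d:ℝ) * η ^ 2) :=
            Real.sqrt_le_sqrt hsum
        _ = Real.sqrt d * η := by
            rw [Real.sqrt_mul (Nat.cast_nonneg d), Real.sqrt_sq hη.le]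
        _ < ε := hkey
    · exact fun i => (hIfacts i _ (hy i)).1
  have hBmeas : B = (MeasurableEquiv.toLp 2 (Fin d → ℝ)).symm ⁻¹' (Set.univ.pi I) := by
    ext x
    simp only [hBdef, Set.mem_setOf_eq, Set.mem_preimage, Set.mem_pi, Set.mem_univ,
      forall_true_left]
    rfl
  have hvol : volume B = ∏ i, volume (I i) := by
    rw [hBmeas, (EuclideanSpace.volume_preserving_symm_measurableEquiv_toLp (Fin d)).measure_preimage
      ((MeasurableSet.univ_pi (fun i => measurableSet_Icc)).nullMeasurableSet)]
    exact volume_pi_pi I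
  have hvolI : ∀ i, volume (I i) = ENNReal.ofReal η := by
    intro i; rw [hIdef]; simp [Real.volume_Icc]
  have hBpos : 0 < volume B := by
    rw [hvol]
    rw [Finset.prod_congr rfl (fun i _ => hvolI i), Finset.prod_const]
    have hne : (ENNReal.ofReal η) ≠ 0 := by
      simp only [ne_eq, ENNReal.ofReal_eq_zero, not_le]; exact hη
    simpa [pos_iff_ne_zero] using pow_ne_zero d hne
  exact lt_of_lt_of_le hBpos (measure_mono hBsub)

/-- value of a continuous function is dominated by the essential sup over its cube -/
lemma nnnorm_le_cubeSup {f : Euc d → ℂ} (hf : Continuous f) {k : Fin d → ℤ} {x₀ : Euc d}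
    (hx : ∀ i, x₀ i - (k i : ℝ) ∈ Set.Icc (0:ℝ) 1) :
    (‖f x₀‖₊ : ℝ≥0∞) ≤ cubeSup f k := by
  by_contra hlt
  push_neg at hlt
  set V : Set (Euc d) := {x : Euc d | cubeSup f k < (‖f (x + zemb k)‖₊ : ℝ≥0∞)} with hVdef
  have hVopen : IsOpen V := by
    have hcont : Continuous fun x : Euc d => (‖f (x + zemb k)‖₊ : ℝ≥0∞) :=
      ENNReal.continuous_coe.comp (continuous_nnnorm.comp (hf.comp (continuous_add_right _)))
    exact isOpen_Ioi.preimage hcont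
  have hmem : x₀ - zemb k ∈ V := by
    simp only [hVdef, Set.mem_setOf_eq, sub_add_cancel]
    exact hlt
  have hmemQ : x₀ - zemb k ∈ Q0 d := fun i => by rw [sub_zemb_apply]; exact hx i
  have hnull : (volume.restrict {x : Euc d | ∀ i, x i ∈ Set.Icc (0:ℝ) 1}) V = 0 := by
    have hae := ae_le_essSup (μ := volume.restrict {x : Euc d | ∀ i, x i ∈ Set.Icc (0:ℝ) 1})
      (fun x : Euc d => (‖f (x + zemb k)‖₊ : ℝ≥0∞))
    rw [Filter.eventually_iff, mem_ae_iff] at hae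
    refine measure_mono_null ?_ hae
    intro x hx'
    simp only [Set.mem_compl_iff, Set.mem_setOf_eq, not_le]
    exact hx'
  rw [Measure.restrict_apply hVopen.measurableSet] at hnull
  have hpos := volume_inter_cube_pos hmemQ hVopen hmem
  have : volume (V ∩ Q0 d) = 0 := hnull
  rw [this] at hpos
  exact lt_irrefl 0 hpos

/-! ### Floor decomposition and packing -/

lemma floor_sub_cases (a b : ℝ) : ⌊a - b⌋ = ⌊a⌋ + ⌊-b⌋ ∨ ⌊a - b⌋ = ⌊a⌋ + ⌊-b⌋ + 1 := by
  have h1 : ⌊a - b⌋ = ⌊a⌋ + ⌊Int.fract a - b⌋ := by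
    rw [show a - b = (⌊a⌋ : ℝ) + (Int.fract a - b) by rw [Int.fract]; ring]
    exact Int.floor_intCast_add _ _
  have hlo : ⌊-b⌋ ≤ ⌊Int.fract a - b⌋ :=
    Int.floor_le_floor (by linarith [Int.fract_nonneg a])
  have hhi : ⌊Int.fract a - b⌋ ≤ ⌊-b⌋ + 1 := by
    have := Int.floor_le_floor (R := ℝ) (le_of_lt (by linarith [Int.fract_lt_one a] :
      Int.fract a - b < -b + 1))
    rwa [Int.floor_add_one] at this
  omega

lemma zfloor_sub_zemb (x : Euc d) (k : Fin d → ℤ) : zfloor (x - zemb k) = zfloor x - k := by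
  funext i
  show ⌊(x - zemb k) i⌋ = ⌊x i⌋ - k i
  rw [sub_zemb_apply, Int.floor_sub_intCast]

lemma zfloor_sub_decomp (z y : Euc d) :
    ∃ e : Fin d → Fin 2, zfloor (z - y) =
      (zfloor z) + (fun i => ⌊-(y i)⌋) + (fun i => ((e i : ℕ) : ℤ)) := by
  classical
  refine ⟨fun i => if ⌊z i - y i⌋ = ⌊z i⌋ + ⌊-(y i)⌋ then 0 else 1, funext fun i => ?_⟩
  show ⌊(z - y) i⌋ = ⌊z i⌋ + ⌊-(y i)⌋ +
    ((if ⌊z i - y i⌋ = ⌊z i⌋ + ⌊-(y i)⌋ then (0:Fin 2) else 1) : Fin 2).val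
  rw [sub_apply']
  split_ifs with h
  · simpa using h
  · rcases floor_sub_cases (z i) (y i) with h1 | h2
    · exact absurd h1 h
    · simpa using h2

lemma packing {J : Type*} {X : J → Euc d} {δ : ℝ} (hδ : 0 < δ) (hsep : SeparatedWith X δ) :
    ∃ N : ℕ, ∀ (k : Fin d → ℤ) (s : Finset J), (∀ j ∈ s, zfloor (X j) = k) → s.card ≤ N := by
  classical
  set r := δ / 2 with hrdef
  have hr : 0 < r := by positivity
  set R := Real.sqrt d + δ with hRdef
  set vr := volume (Metric.ball (0 : Euc d) r) with hvr
  set vR := volume (Metric.ball (0 : Euc d) R) with hvR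
  have hvr0 : vr ≠ 0 := (Metric.measure_ball_pos _ _ hr).ne'
  have hvrt : vr ≠ ∞ := measure_ball_lt_top.ne
  have hvRt : vR ≠ ∞ := measure_ball_lt_top.ne
  refine ⟨⌈(vR / vr).toReal⌉₊, fun k s hs => ?_⟩
  have hdisj : (s : Set J).Pairwise
      (Function.onFun Disjoint (fun j => Metric.ball (X j) r)) := by
    intro i _ j _ hij
    refine Metric.ball_disjoint_ball ?_
    calc r + r = δ := by rw [hrdef]; ring
      _ ≤ dist (X i) (X j) := hsep i j hij
  have hsub : ∀ j ∈ s, Metric.ball (X j) r ⊆ Metric.ball (zemb k) R := by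
    intro j hj y hy
    rw [Metric.mem_ball] at hy ⊢
    have hdk : dist (X j) (zemb k) ≤ Real.sqrt d := by
      refine cube_dist_le fun i => ?_
      have hk : k i = ⌊X j i⌋ := by rw [← hs j hj]; rfl
      rw [hk]
      constructor
      · linarith [Int.floor_le (X j i)]
      · linarith [Int.lt_floor_add_one (X j i)]
    calc dist y (zemb k) ≤ dist y (X j) + dist (X j) (zemb k) := dist_triangle _ _ _
      _ < r + Real.sqrt d := by
          refine add_lt_add_of_lt_of_le hy hdk
      _ ≤ R := by rw [hRdef, hrdef]; linarith
  have hcard : (s.card : ℝ≥0∞) * vr ≤ vR := by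
    have h1 : ∀ j ∈ s, volume (Metric.ball (X j) r) = vr := fun j _ => by
      rw [hvr, Measure.addHaar_ball_center]
    calc (s.card : ℝ≥0∞) * vr = ∑ _j ∈ s, vr := by
          rw [Finset.sum_const, nsmul_eq_mul]
      _ = ∑ j ∈ s, volume (Metric.ball (X j) r) := by
          exact (Finset.sum_congr rfl h1).symm
      _ = volume (⋃ j ∈ s, Metric.ball (X j) r) :=
          (measure_biUnion_finset hdisj (fun j _ => measurableSet_ball)).symm
      _ ≤ vR := by
          rw [hvR, ← Measure.addHaar_ball_center volume (zemb k)]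
          exact measure_mono (Set.iUnion₂_subset hsub)
  have h2 : (s.card : ℝ≥0∞) ≤ vR / vr :=
    (ENNReal.le_div_iff_mul_le (Or.inl hvr0) (Or.inl hvrt)).mpr hcard
  have hfin : vR / vr ≠ ∞ := (ENNReal.div_lt_top hvRt hvr0).ne
  have h3 : (s.card : ℝ) ≤ (vR / vr).toReal := by
    have := ENNReal.toReal_mono hfin h2
    simpa using this
  calc s.card = ⌈((s.card : ℕ) : ℝ)⌉₊ := (Nat.ceil_natCast _).symm
    _ ≤ ⌈(vR / vr).toReal⌉₊ := Nat.ceil_mono h3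

lemma fiber_tsum_le {J : Type*} {X : J → Euc d} {N : ℕ}
    (hN : ∀ (k : Fin d → ℤ) (s : Finset J), (∀ j ∈ s, zfloor (X j) = k) → s.card ≤ N)
    (u : (Fin d → ℤ) → ℝ≥0∞) :
    ∑' j, u (zfloor (X j)) ≤ (N : ℝ≥0∞) * ∑' k, u k := by
  classical
  rw [ENNReal.tsum_eq_iSup_sum]
  refine iSup_le fun s => ?_
  rw [Finset.sum_comp (fun k => u k) (fun j => zfloor (X j))]
  calc ∑ k ∈ s.image (fun j => zfloor (X j)),
        (s.filter (fun j => zfloor (X j) = k)).card • u k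
      ≤ ∑ k ∈ s.image (fun j => zfloor (X j)), (N : ℝ≥0∞) * u k := by
        refine Finset.sum_le_sum fun k _ => ?_
        rw [nsmul_eq_mul]
        refine mul_le_mul_left ?_ _
        exact_mod_cast Nat.cast_le.mpr
          (hN k _ (fun j hj => (Finset.mem_filter.mp hj).2))
    _ = (N : ℝ≥0∞) * ∑ k ∈ s.image (fun j => zfloor (X j)), u k := by
        rw [Finset.mul_sum]
    _ ≤ (N : ℝ≥0∞) * ∑' k, u k :=
        mul_le_mul_right (ENNReal.sum_le_tsum _) _

lemma myLp_fiber_le {J : Type*} {X : J → Euc d} {N : ℕ}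
    (hN : ∀ (k : Fin d → ℤ) (s : Finset J), (∀ j ∈ s, zfloor (X j) = k) → s.card ≤ N)
    {p : ℝ≥0∞} (hp : 1 ≤ p) (u : (Fin d → ℤ) → ℝ≥0∞) :
    myLp p (fun j => u (zfloor (X j))) ≤ ((N : ℝ≥0∞) + 1) * myLp p u := by
  rcases eq_or_ne p ∞ with hP | hP
  · subst hP
    simp only [myLp, if_pos rfl]
    refine le_trans (iSup_le fun j => le_iSup u (zfloor (X j))) ?_
    exact le_mul_of_one_le_left (zero_le) (by simp)
  · have hq1 : 1 ≤ p.toReal := one_le_toReal_of_one_le hp hP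
    have hq : 0 < p.toReal := lt_of_lt_of_le one_pos hq1
    simp only [myLp, if_neg hP]
    have step : ∑' j, u (zfloor (X j)) ^ p.toReal ≤ (N : ℝ≥0∞) * ∑' k, u k ^ p.toReal :=
      fiber_tsum_le hN (fun k => u k ^ p.toReal)
    calc (∑' j, u (zfloor (X j)) ^ p.toReal) ^ (1 / p.toReal)
        ≤ ((N : ℝ≥0∞) * ∑' k, u k ^ p.toReal) ^ (1 / p.toReal) :=
          ENNReal.rpow_le_rpow step (by positivity)
      _ = (N : ℝ≥0∞) ^ (1 / p.toReal) * (∑' k, u k ^ p.toReal) ^ (1 / p.toReal) :=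
          ENNReal.mul_rpow_of_nonneg _ _ (by positivity)
      _ ≤ ((N : ℝ≥0∞) + 1) * (∑' k, u k ^ p.toReal) ^ (1 / p.toReal) := by
          refine mul_le_mul_left ?_ _
          rcases Nat.eq_zero_or_pos N with h0 | hpos
          · subst h0
            simp only [Nat.cast_zero]
            rw [show ((0:ℝ≥0∞) ^ (1/p.toReal)) = 0 from
              ENNReal.zero_rpow_of_pos (one_div_pos.mpr hq)]
            exact zero_le
          · have hN1 : (1 : ℝ≥0∞) ≤ (N : ℝ≥0∞) := by exact_mod_cast hpos
            calc (N : ℝ≥0∞) ^ (1 / p.toReal) ≤ (N : ℝ≥0∞) ^ (1 : ℝ) :=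
                  ENNReal.rpow_le_rpow_of_exponent_le hN1 ((div_le_one hq).mpr hq1)
              _ = (N : ℝ≥0∞) := ENNReal.rpow_one _
              _ ≤ (N : ℝ≥0∞) + 1 := le_self_add

/-! ### Pointwise and amalgam bounds for `genFun` -/

lemma wnorm_one_eq (f : Euc d → ℂ) : WNorm 1 f = ∑' k, cubeSup f k := by
  simp [WNorm]

lemma cubeSup_le_wnorm {p : ℝ≥0∞} (hp : 1 ≤ p) (f : Euc d → ℂ) (k : Fin d → ℤ) :
    cubeSup f k ≤ WNorm p f := by
  rw [WNorm_eq_myLp]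
  exact le_myLp hp (cubeSup f) k

lemma genFun_nnnorm_le {r : ℕ} (Φ : Fin r → Euc d → ℂ) (C : Fin r → (Fin d → ℤ) → ℂ)
    (x : Euc d) :
    (‖genFun Φ C x‖₊ : ℝ≥0∞) ≤
      ∑' m, ∑ i, (‖C i m‖₊ : ℝ≥0∞) * (‖Φ i (x - zemb m)‖₊ : ℝ≥0∞) := by
  set b : (Fin d → ℤ) → ℝ≥0 := fun m => ∑ i, ‖C i m‖₊ * ‖Φ i (x - zemb m)‖₊ with hbdef
  have hcoe : ∀ m, ((b m : ℝ≥0∞)) = ∑ i, (‖C i m‖₊ : ℝ≥0∞) * (‖Φ i (x - zemb m)‖₊ : ℝ≥0∞) := by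
    intro m; rw [hbdef]; push_cast; rfl
  have hterm : ∀ m, ‖∑ i, C i m * Φ i (x - zemb m)‖₊ ≤ b m := by
    intro m
    refine le_trans (nnnorm_sum_le _ _) ?_
    refine Finset.sum_le_sum fun i _ => ?_
    rw [nnnorm_mul]
  rcases eq_or_ne (∑' m, ∑ i, (‖C i m‖₊ : ℝ≥0∞) * (‖Φ i (x - zemb m)‖₊ : ℝ≥0∞)) ∞ with htop | htop
  · rw [htop]; exact le_top
  · have hbsum : Summable b := by
      rw [← ENNReal.tsum_coe_ne_top_iff_summable]
      simpa [hcoe] using htop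
    have hnnsum : Summable (fun m => ‖∑ i, C i m * Φ i (x - zemb m)‖₊) :=
      NNReal.summable_of_le hterm hbsum
    have hsum : Summable (fun m => ∑ i, C i m * Φ i (x - zemb m)) :=
      Summable.of_nnnorm hnnsum
    calc (‖genFun Φ C x‖₊ : ℝ≥0∞) ≤ ((∑' m, ‖∑ i, C i m * Φ i (x - zemb m)‖₊ : ℝ≥0) : ℝ≥0∞) :=
          ENNReal.coe_le_coe.mpr (nnnorm_tsum_le hnnsum)
      _ = ∑' m, ((‖∑ i, C i m * Φ i (x - zemb m)‖₊ : ℝ≥0) : ℝ≥0∞) :=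
          ENNReal.coe_tsum hnnsum
      _ ≤ ∑' m, ((b m : ℝ≥0) : ℝ≥0∞) :=
          ENNReal.tsum_le_tsum fun m => ENNReal.coe_le_coe.mpr (hterm m)
      _ = ∑' m, ∑ i, (‖C i m‖₊ : ℝ≥0∞) * (‖Φ i (x - zemb m)‖₊ : ℝ≥0∞) :=
          tsum_congr hcoe

lemma cubeSup_genFun_le {r : ℕ} (Φ : Fin r → Euc d → ℂ) (C : Fin r → (Fin d → ℤ) → ℂ)
    (k : Fin d → ℤ) :
    cubeSup (genFun Φ C) k ≤
      ∑ i, ∑' m, (‖C i m‖₊ : ℝ≥0∞) * cubeSup (Φ i) (k - m) := by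
  refine essSup_le_of_ae_le _ ?_
  have hae : ∀ᵐ x ∂(volume.restrict {x : Euc d | ∀ i, x i ∈ Set.Icc (0:ℝ) 1}),
      ∀ (m : Fin d → ℤ) (i : Fin r),
        (‖Φ i (x + zemb k - zemb m)‖₊ : ℝ≥0∞) ≤ cubeSup (Φ i) (k - m) := by
    rw [ae_all_iff]
    intro m
    rw [ae_all_iff]
    intro i
    have h := ae_le_essSup (μ := volume.restrict {x : Euc d | ∀ i, x i ∈ Set.Icc (0:ℝ) 1})
      (fun x : Euc d => (‖Φ i (x + zemb (k - m))‖₊ : ℝ≥0∞))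
    filter_upwards [h] with x hx
    have : x + zemb k - zemb m = x + zemb (k - m) := by rw [zemb_sub]; abel
    rw [this]
    exact hx
  filter_upwards [hae] with x hx
  calc (‖genFun Φ C (x + zemb k)‖₊ : ℝ≥0∞)
      ≤ ∑' m, ∑ i, (‖C i m‖₊ : ℝ≥0∞) * (‖Φ i (x + zemb k - zemb m)‖₊ : ℝ≥0∞) :=
        genFun_nnnorm_le Φ C _
    _ ≤ ∑' m, ∑ i, (‖C i m‖₊ : ℝ≥0∞) * cubeSup (Φ i) (k - m) := by
        refine ENNReal.tsum_le_tsum fun m => Finset.sum_le_sum fun i _ => ?_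
        exact mul_le_mul_right (hx m i) _
    _ = ∑ i, ∑' m, (‖C i m‖₊ : ℝ≥0∞) * cubeSup (Φ i) (k - m) :=
        Summable.tsum_finsetSum fun i _ => ENNReal.summable

lemma myLp_conv_le {p : ℝ≥0∞} (hp : 1 ≤ p) (a F : (Fin d → ℤ) → ℝ≥0∞) :
    myLp p (fun k => ∑' m, a m * F (k - m)) ≤ (∑' m, F m) * myLp p a := by
  have h1 : ∀ k, ∑' m, a m * F (k - m) = ∑' m, F m * a (k - m) := by
    intro k
    rw [← (Equiv.subLeft k).tsum_eq (fun m => a m * F (k - m))]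
    refine tsum_congr fun m => ?_
    rw [Equiv.subLeft_apply]
    have hkm : k - (k - m) = m := by abel
    rw [hkm, mul_comm]
  simp_rw [h1]
  calc myLp p (fun k => ∑' m, F m * a (k - m))
      ≤ ∑' m, myLp p (fun k => F m * a (k - m)) := myLp_tsum_le hp _
    _ = ∑' m, F m * myLp p (fun k => a (k - m)) := tsum_congr fun m => myLp_const_mul hp _ _
    _ = ∑' m, F m * myLp p a := by
        refine tsum_congr fun m => ?_
        rw [show (fun k => a (k - m)) = (fun k => a ((Equiv.subRight m) k)) from rfl,
          myLp_comp_equiv a (Equiv.subRight m)]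
    _ = (∑' m, F m) * myLp p a := ENNReal.tsum_mul_right

/-- amalgam (Young) estimate for `genFun`. -/
lemma wnorm_genFun_le {r : ℕ} {p : ℝ≥0∞} (hp : 1 ≤ p) (Φ : Fin r → Euc d → ℂ)
    (C : Fin r → (Fin d → ℤ) → ℂ) :
    WNorm p (genFun Φ C) ≤ ∑ i, WNorm 1 (Φ i) * lpNorm p (C i) := by
  rw [WNorm_eq_myLp]
  calc myLp p (cubeSup (genFun Φ C))
      ≤ myLp p (fun k => ∑ i, ∑' m, (‖C i m‖₊ : ℝ≥0∞) * cubeSup (Φ i) (k - m)) :=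
        myLp_mono (cubeSup_genFun_le Φ C)
    _ ≤ ∑ i, myLp p (fun k => ∑' m, (‖C i m‖₊ : ℝ≥0∞) * cubeSup (Φ i) (k - m)) := by
        have := myLp_sum_le (ι := Fin d → ℤ) (β := Fin r) hp
          (fun i k => ∑' m, (‖C i m‖₊ : ℝ≥0∞) * cubeSup (Φ i) (k - m))
        simpa using this
    _ ≤ ∑ i, WNorm 1 (Φ i) * lpNorm p (C i) := by
        refine Finset.sum_le_sum fun i _ => ?_
        have := myLp_conv_le hp (fun m => (‖C i m‖₊ : ℝ≥0∞)) (cubeSup (Φ i))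
        rw [wnorm_one_eq, lpNorm_eq_myLp]
        exact this

/-! ### Continuity of `genFun` -/

lemma genFun_continuous {r : ℕ} (Φ : Fin r → Euc d → ℂ) (C : Fin r → (Fin d → ℤ) → ℂ)
    (hΦc : ∀ i, Continuous (Φ i)) (hΦW : ∀ i, WNorm 1 (Φ i) ≠ ∞)
    {b : ℝ≥0} (hC : ∀ i m, ‖C i m‖₊ ≤ b) :
    Continuous (genFun Φ C) := by
  classical
  refine continuous_iff_continuousAt.mpr fun x₀ => ?_
  have hFfin : ∀ (i : Fin r) (m : Fin d → ℤ), cubeSup (Φ i) m ≠ ∞ := fun i m =>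
    (lt_of_le_of_lt (cubeSup_le_wnorm le_rfl (Φ i) m)
      (lt_top_iff_ne_top.mpr (hΦW i))).ne
  have hFsum : ∀ i, Summable (fun m : Fin d → ℤ => (cubeSup (Φ i) m).toReal) := by
    intro i
    refine ENNReal.summable_toReal ?_
    rw [← wnorm_one_eq]
    exact hΦW i
  set c : (Fin d → Fin 3) → (Fin d → ℤ) := fun e => (fun j => (e j : ℤ) - 1) with hcdef
  set u : (Fin d → ℤ) → ℝ := fun m =>
    (b : ℝ) * ∑ i, ∑ e : Fin d → Fin 3, (cubeSup (Φ i) (zfloor x₀ - m + c e)).toReal with hudef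
  have hu : Summable u := by
    refine Summable.mul_left _ ?_
    refine summable_sum fun i _ => ?_
    refine summable_sum fun e _ => ?_
    have heq : (fun m => (cubeSup (Φ i) (zfloor x₀ - m + c e)).toReal)
        = (fun m => (cubeSup (Φ i) m).toReal) ∘
          ((Equiv.subLeft (zfloor x₀)).trans (Equiv.addRight (c e))) := rfl
    rw [heq, Equiv.summable_iff]
    exact hFsum i
  have hbound : ∀ (m : Fin d → ℤ), ∀ x ∈ Metric.ball x₀ 1,
      ‖∑ i, C i m * Φ i (x - zemb m)‖ ≤ u m := by
    intro m x hx
    have hΦbound : ∀ i, ‖Φ i (x - zemb m)‖ ≤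
        ∑ e : Fin d → Fin 3, (cubeSup (Φ i) (zfloor x₀ - m + c e)).toReal := by
      intro i
      have h1 : (‖Φ i (x - zemb m)‖₊ : ℝ≥0∞) ≤ cubeSup (Φ i) (zfloor x - m) := by
        have h := nnnorm_le_cubeSup (hΦc i) (k := zfloor (x - zemb m)) (x₀ := x - zemb m)
          (fun j => ⟨by
            show (0:ℝ) ≤ (x - zemb m) j - ((⌊(x - zemb m) j⌋ : ℤ) : ℝ)
            linarith [Int.floor_le ((x - zemb m) j)], by
            show (x - zemb m) j - ((⌊(x - zemb m) j⌋ : ℤ) : ℝ) ≤ 1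
            linarith [Int.lt_floor_add_one ((x - zemb m) j)]⟩)
        rwa [zfloor_sub_zemb] at h
      obtain ⟨e, he⟩ : ∃ e : Fin d → Fin 3, zfloor x - m = zfloor x₀ - m + c e := by
        have hcoord : ∀ j, ⌊x₀ j⌋ - 1 ≤ ⌊x j⌋ ∧ ⌊x j⌋ ≤ ⌊x₀ j⌋ + 1 := by
          intro j
          have habs : |x j - x₀ j| ≤ dist x x₀ := abs_coord_le_dist x x₀ j
          have hd : dist x x₀ < 1 := Metric.mem_ball.mp hx
          have h2 := abs_le.mp (le_of_lt (lt_of_le_of_lt habs hd))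
          constructor
          · have hle : x₀ j - (1:ℝ) ≤ x j := by linarith [h2.1]
            have := Int.floor_le_floor hle
            rwa [show x₀ j - (1:ℝ) = x₀ j - ((1:ℤ):ℝ) by norm_num, Int.floor_sub_intCast] at this
          · have hle : x j ≤ x₀ j + (1:ℝ) := by linarith [h2.2]
            have := Int.floor_le_floor hle
            rwa [show x₀ j + (1:ℝ) = x₀ j + ((1:ℤ):ℝ) by norm_num, Int.floor_add_intCast] at this
        refine ⟨fun j => if ⌊x j⌋ = ⌊x₀ j⌋ - 1 then 0 else if ⌊x j⌋ = ⌊x₀ j⌋ then 1 else 2,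
          funext fun j => ?_⟩
        have h := hcoord j
        simp only [Pi.sub_apply, Pi.add_apply, hcdef, zfloor]
        split_ifs with h0 h1 <;> simp <;> omega
      rw [he] at h1
      have h2 : ‖Φ i (x - zemb m)‖ ≤ (cubeSup (Φ i) (zfloor x₀ - m + c e)).toReal := by
        have := ENNReal.toReal_mono (hFfin i _) h1
        simpa using this
      refine le_trans h2 ?_
      exact Finset.single_le_sum
        (f := fun e' => (cubeSup (Φ i) (zfloor x₀ - m + c e')).toReal)
        (fun e' _ => ENNReal.toReal_nonneg) (Finset.mem_univ e)
    calc ‖∑ i, C i m * Φ i (x - zemb m)‖ ≤ ∑ i, ‖C i m * Φ i (x - zemb m)‖ :=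
          norm_sum_le _ _
      _ ≤ ∑ i, (b:ℝ) * (∑ e : Fin d → Fin 3, (cubeSup (Φ i) (zfloor x₀ - m + c e)).toReal) := by
          refine Finset.sum_le_sum fun i _ => ?_
          rw [norm_mul]
          refine mul_le_mul ?_ (hΦbound i) (norm_nonneg _) (b.coe_nonneg)
          exact_mod_cast hC i m
      _ = u m := by simp only [hudef]; rw [Finset.mul_sum]
  have htendsto : TendstoUniformlyOn
      (fun (t : Finset (Fin d → ℤ)) x => ∑ m ∈ t, ∑ i, C i m * Φ i (x - zemb m))
      (fun x => ∑' m, ∑ i, C i m * Φ i (x - zemb m)) Filter.atTop (Metric.ball x₀ 1) :=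
    tendstoUniformlyOn_tsum hu hbound
  have hcont : ContinuousOn (genFun Φ C) (Metric.ball x₀ 1) := by
    have hgen : genFun Φ C = fun x => ∑' m, ∑ i, C i m * Φ i (x - zemb m) := rfl
    rw [hgen]
    refine htendsto.continuousOn (Filter.Frequently.of_forall fun t => ?_)
    exact (continuous_finset_sum _ fun m _ => continuous_finset_sum _ fun i _ =>
      (continuous_const.mul ((hΦc i).comp (continuous_sub_right _)))).continuousOn
  exact hcont.continuousAt (Metric.ball_mem_nhds x₀ one_pos)

/-! ### Complex measure facts -/

lemma cmNorm_single {ν : ComplexMeasure (Euc d)} {A : Set (Euc d)} (hA : MeasurableSet A) :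
    (‖ν A‖₊ : ℝ≥0∞) ≤ cmNorm ν := by
  unfold cmNorm
  refine le_iSup_of_le 1 ?_
  refine le_iSup_of_le (fun _ => A) ?_
  refine le_iSup_of_le (fun _ => hA) ?_
  refine le_iSup_of_le (Subsingleton.pairwise) ?_
  simp

lemma jordan_univ_le {ν : ComplexMeasure (Euc d)} {s : SignedMeasure (Euc d)}
    (hs : ∀ A, MeasurableSet A → |s A| ≤ ‖ν A‖) :
    s.toJordanDecomposition.posPart Set.univ ≤ cmNorm ν ∧
      s.toJordanDecomposition.negPart Set.univ ≤ cmNorm ν := by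
  obtain ⟨i, hi₁, hi₂, hi₃, hpos, hneg⟩ := s.toJordanDecomposition_spec
  constructor
  · rw [hpos, SignedMeasure.toMeasureOfZeroLE_apply _ hi₂ hi₁ MeasurableSet.univ]
    refine le_trans ?_ (cmNorm_single hi₁)
    rw [ENNReal.coe_le_coe, ← NNReal.coe_le_coe]
    simp only [coe_nnnorm, NNReal.coe_mk]
    rw [Set.inter_univ]
    calc s i ≤ |s i| := le_abs_self _
      _ ≤ ‖ν i‖ := hs i hi₁
  · rw [hneg, SignedMeasure.toMeasureOfLEZero_apply _ hi₃ hi₁.compl MeasurableSet.univ]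
    refine le_trans ?_ (cmNorm_single hi₁.compl)
    rw [ENNReal.coe_le_coe, ← NNReal.coe_le_coe]
    simp only [coe_nnnorm, NNReal.coe_mk]
    rw [Set.inter_univ]
    calc -s iᶜ ≤ |s iᶜ| := neg_le_abs _
      _ ≤ ‖ν iᶜ‖ := hs iᶜ hi₁.compl

lemma jordan_re_posPart_univ_le (ν : ComplexMeasure (Euc d)) :
    (ComplexMeasure.re ν).toJordanDecomposition.posPart Set.univ ≤ cmNorm ν :=
  (jordan_univ_le (fun A _ => by
    rw [ComplexMeasure.re_apply]
    exact Complex.abs_re_le_norm _)).1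

lemma jordan_re_negPart_univ_le (ν : ComplexMeasure (Euc d)) :
    (ComplexMeasure.re ν).toJordanDecomposition.negPart Set.univ ≤ cmNorm ν :=
  (jordan_univ_le (fun A _ => by
    rw [ComplexMeasure.re_apply]
    exact Complex.abs_re_le_norm _)).2

lemma jordan_im_posPart_univ_le (ν : ComplexMeasure (Euc d)) :
    (ComplexMeasure.im ν).toJordanDecomposition.posPart Set.univ ≤ cmNorm ν :=
  (jordan_univ_le (fun A _ => by
    rw [ComplexMeasure.im_apply]
    exact Complex.abs_im_le_norm _)).1

lemma jordan_im_negPart_univ_le (ν : ComplexMeasure (Euc d)) :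
    (ComplexMeasure.im ν).toJordanDecomposition.negPart Set.univ ≤ cmNorm ν :=
  (jordan_univ_le (fun A _ => by
    rw [ComplexMeasure.im_apply]
    exact Complex.abs_im_le_norm _)).2

lemma mconv_nnnorm_le (ν : ComplexMeasure (Euc d)) (f : Euc d → ℂ) (x : Euc d) :
    (‖mconv ν f x‖₊ : ℝ≥0∞) ≤
      (∫⁻ y, (‖f (x - y)‖₊ : ℝ≥0∞) ∂(ComplexMeasure.re ν).toJordanDecomposition.posPart) +
      (∫⁻ y, (‖f (x - y)‖₊ : ℝ≥0∞) ∂(ComplexMeasure.re ν).toJordanDecomposition.negPart) +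
      (∫⁻ y, (‖f (x - y)‖₊ : ℝ≥0∞) ∂(ComplexMeasure.im ν).toJordanDecomposition.posPart) +
      (∫⁻ y, (‖f (x - y)‖₊ : ℝ≥0∞) ∂(ComplexMeasure.im ν).toJordanDecomposition.negPart) := by
  set A1 := ∫ y, f (x - y) ∂(ComplexMeasure.re ν).toJordanDecomposition.posPart with hA1
  set A2 := ∫ y, f (x - y) ∂(ComplexMeasure.re ν).toJordanDecomposition.negPart with hA2
  set A3 := ∫ y, f (x - y) ∂(ComplexMeasure.im ν).toJordanDecomposition.posPart with hA3
  set A4 := ∫ y, f (x - y) ∂(ComplexMeasure.im ν).toJordanDecomposition.negPart with hA4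
  have h1 : ‖mconv ν f x‖ ≤ ‖A1‖ + ‖A2‖ + ‖A3‖ + ‖A4‖ := by
    show ‖(A1 - A2) + Complex.I * (A3 - A4)‖ ≤ _
    calc ‖(A1 - A2) + Complex.I * (A3 - A4)‖
        ≤ ‖A1 - A2‖ + ‖Complex.I * (A3 - A4)‖ := norm_add_le _ _
      _ = ‖A1 - A2‖ + ‖A3 - A4‖ := by rw [norm_mul, Complex.norm_I, one_mul]
      _ ≤ (‖A1‖ + ‖A2‖) + (‖A3‖ + ‖A4‖) := add_le_add (norm_sub_le _ _) (norm_sub_le _ _)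
      _ = ‖A1‖ + ‖A2‖ + ‖A3‖ + ‖A4‖ := by ring
  calc (‖mconv ν f x‖₊ : ℝ≥0∞) = ENNReal.ofReal ‖mconv ν f x‖ :=
        (ofReal_norm _).symm
    _ ≤ ENNReal.ofReal (‖A1‖ + ‖A2‖ + ‖A3‖ + ‖A4‖) := ENNReal.ofReal_le_ofReal h1
    _ = ENNReal.ofReal ‖A1‖ + ENNReal.ofReal ‖A2‖ + ENNReal.ofReal ‖A3‖
        + ENNReal.ofReal ‖A4‖ := by
        rw [ENNReal.ofReal_add (by positivity) (norm_nonneg _),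
          ENNReal.ofReal_add (by positivity) (norm_nonneg _),
          ENNReal.ofReal_add (norm_nonneg _) (norm_nonneg _)]
    _ = (‖A1‖₊ : ℝ≥0∞) + ‖A2‖₊ + ‖A3‖₊ + ‖A4‖₊ := by
        rw [ofReal_norm, ofReal_norm,
          ofReal_norm, ofReal_norm]
        rfl
    _ ≤ _ := by
        gcongr <;> exact enorm_integral_le_lintegral_enorm _

lemma integrable_of_bounded_cont {g : Euc d → ℂ} (hg : Continuous g) {B : ℝ}
    (hB : ∀ y, ‖g y‖ ≤ B) (ρ : Measure (Euc d)) [IsFiniteMeasure ρ] : Integrable g ρ :=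
  ⟨hg.aestronglyMeasurable, HasFiniteIntegral.of_bounded (Filter.Eventually.of_forall hB)⟩

lemma signed_jint_add (s t : SignedMeasure (Euc d)) {g : Euc d → ℂ}
    (hint : ∀ ρ : Measure (Euc d), IsFiniteMeasure ρ → Integrable g ρ) :
    ((∫ x, g x ∂(s + t).toJordanDecomposition.posPart) -
        ∫ x, g x ∂(s + t).toJordanDecomposition.negPart) =
      ((∫ x, g x ∂s.toJordanDecomposition.posPart) -
        ∫ x, g x ∂s.toJordanDecomposition.negPart) +
      ((∫ x, g x ∂t.toJordanDecomposition.posPart) -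
        ∫ x, g x ∂t.toJordanDecomposition.negPart) := by
  have hval : ∀ (u : SignedMeasure (Euc d)) (A : Set (Euc d)), MeasurableSet A →
      u A = (u.toJordanDecomposition.posPart A).toReal -
        (u.toJordanDecomposition.negPart A).toReal := by
    intro u A hA
    conv_lhs => rw [← u.toSignedMeasure_toJordanDecomposition]
    rw [JordanDecomposition.toSignedMeasure, Measure.toSignedMeasure_sub_apply hA]
    rfl
  have key : (s + t).toJordanDecomposition.posPart +
      (s.toJordanDecomposition.negPart + t.toJordanDecomposition.negPart) =
      (s + t).toJordanDecomposition.negPart +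
      (s.toJordanDecomposition.posPart + t.toJordanDecomposition.posPart) := by
    ext A hA
    have h1 := hval (s + t) A hA
    have h2 := hval s A hA
    have h3 := hval t A hA
    have hadd : (s + t) A = s A + t A := VectorMeasure.add_apply _ _ _
    simp only [Measure.add_apply]
    have e1 : (s + t).toJordanDecomposition.posPart A ≠ ∞ := measure_ne_top _ _
    have e2 : (s + t).toJordanDecomposition.negPart A ≠ ∞ := measure_ne_top _ _
    have e3 : s.toJordanDecomposition.posPart A ≠ ∞ := measure_ne_top _ _
    have e4 : s.toJordanDecomposition.negPart A ≠ ∞ := measure_ne_top _ _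
    have e5 : t.toJordanDecomposition.posPart A ≠ ∞ := measure_ne_top _ _
    have e6 : t.toJordanDecomposition.negPart A ≠ ∞ := measure_ne_top _ _
    refine (ENNReal.toReal_eq_toReal_iff' (by finiteness) (by finiteness)).mp ?_
    rw [ENNReal.toReal_add e1 (by finiteness), ENNReal.toReal_add e2 (by finiteness),
      ENNReal.toReal_add e4 e6, ENNReal.toReal_add e3 e5]
    rw [hadd] at h1
    linarith
  have hI := congrArg (fun μ : Measure (Euc d) => ∫ x, g x ∂μ) key
  rw [integral_add_measure (hint _ inferInstance) ((hint _ inferInstance).add_measure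
      (hint _ inferInstance)),
    integral_add_measure (hint _ inferInstance) ((hint _ inferInstance).add_measure
      (hint _ inferInstance)),
    integral_add_measure (hint _ inferInstance) (hint _ inferInstance),
    integral_add_measure (hint _ inferInstance) (hint _ inferInstance)] at hI
  linear_combination hI

lemma cInt_add (ν₁ ν₂ : ComplexMeasure (Euc d)) {g : Euc d → ℂ}
    (hint : ∀ ρ : Measure (Euc d), IsFiniteMeasure ρ → Integrable g ρ) :
    cInt (ν₁ + ν₂) g = cInt ν₁ g + cInt ν₂ g := by
  unfold cInt
  have hre : ComplexMeasure.re (ν₁ + ν₂) = ComplexMeasure.re ν₁ + ComplexMeasure.re ν₂ :=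
    map_add _ _ _
  have him : ComplexMeasure.im (ν₁ + ν₂) = ComplexMeasure.im ν₁ + ComplexMeasure.im ν₂ :=
    map_add _ _ _
  rw [hre, him, signed_jint_add _ _ hint, signed_jint_add _ _ hint]
  ring

/-! ### The sampling estimate for a perturbing measure -/

/-- integer corner offsets. -/
def ecast (e : Fin d → Fin 2) : Fin d → ℤ := fun i => ((e i : ℕ) : ℤ)

/-- negative-floor map. -/
def negfl (y : Euc d) : Fin d → ℤ := fun i => ⌊-(y i)⌋

lemma negfl_measurable (m : Fin d → ℤ) :
    MeasurableSet {y : Euc d | negfl y = m} := by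
  have hset : {y : Euc d | negfl y = m} = ⋂ i, {y : Euc d | ⌊-(y i)⌋ = m i} := by
    ext y; simp [negfl, funext_iff]
  rw [hset]
  refine MeasurableSet.iInter fun i => ?_
  have hpre : {y : Euc d | ⌊-(y i)⌋ = m i}
      = (fun y : Euc d => y i) ⁻¹' {v : ℝ | ⌊-v⌋ = m i} := rfl
  rw [hpre]
  have hmeas : Measurable (fun y : Euc d => y i) :=
    (EuclideanSpace.proj (𝕜 := ℝ) i).continuous.measurable
  refine hmeas ?_
  have : {v : ℝ | ⌊-v⌋ = m i} = Set.Ioc (-(m i : ℝ) - 1) (-(m i : ℝ)) := by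
    ext v
    rw [Set.mem_setOf_eq, Int.floor_eq_iff]
    constructor
    · rintro ⟨h1, h2⟩
      push_cast at h1 h2 ⊢
      constructor <;> linarith
    · rintro ⟨h1, h2⟩
      push_cast at h1 h2 ⊢
      constructor <;> linarith
  rw [this]
  exact measurableSet_Ioc

lemma negfl_disjoint : Pairwise (Function.onFun Disjoint
    (fun m : Fin d → ℤ => {y : Euc d | negfl y = m})) := by
  intro m m' hmm
  refine Set.disjoint_left.mpr fun y hy hy' => ?_
  exact hmm (hy ▸ hy' ▸ rfl : m = m')

lemma lintegral_conv_le_H {f : Euc d → ℂ} (hf : Continuous f) (ρ : Measure (Euc d))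
    (z : Euc d) :
    ∫⁻ y, (‖f (z - y)‖₊ : ℝ≥0∞) ∂ρ ≤
      ∑' m, ρ {y : Euc d | negfl y = m} *
        ∑ e : Fin d → Fin 2, cubeSup f (zfloor z + m + ecast e) := by
  classical
  set G : (Fin d → ℤ) → ℝ≥0∞ :=
    fun m => ∑ e : Fin d → Fin 2, cubeSup f (zfloor z + m + ecast e) with hG
  have hpt : ∀ y, (‖f (z - y)‖₊ : ℝ≥0∞) ≤ G (negfl y) := by
    intro y
    obtain ⟨e, he⟩ := zfloor_sub_decomp z y
    have h1 : (‖f (z - y)‖₊ : ℝ≥0∞) ≤ cubeSup f (zfloor (z - y)) := by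
      refine nnnorm_le_cubeSup hf (fun j => ⟨?_, ?_⟩)
      · show (0:ℝ) ≤ (z - y) j - ((⌊(z - y) j⌋ : ℤ) : ℝ)
        linarith [Int.floor_le ((z - y) j)]
      · show (z - y) j - ((⌊(z - y) j⌋ : ℤ) : ℝ) ≤ 1
        linarith [Int.lt_floor_add_one ((z - y) j)]
    rw [he] at h1
    refine le_trans h1 ?_
    exact Finset.single_le_sum
      (f := fun e' : Fin d → Fin 2 => cubeSup f (zfloor z + negfl y + ecast e'))
      (fun _ _ => zero_le) (Finset.mem_univ e)
  calc ∫⁻ y, (‖f (z - y)‖₊ : ℝ≥0∞) ∂ρ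
      ≤ ∫⁻ y, G (negfl y) ∂ρ := lintegral_mono hpt
    _ = ∫⁻ y, ∑' m, Set.indicator {y' : Euc d | negfl y' = m} (fun _ => G m) y ∂ρ := by
        refine lintegral_congr fun y => ?_
        rw [tsum_eq_single (negfl y) ?_]
        · rw [Set.indicator_of_mem (by exact rfl)]
        · intro m hm
          rw [Set.indicator_of_notMem]
          intro hmem
          exact hm ((Set.mem_setOf_eq ▸ hmem).symm)
    _ = ∑' m, ∫⁻ y, Set.indicator {y' : Euc d | negfl y' = m} (fun _ => G m) y ∂ρ :=
        lintegral_tsum fun m => (measurable_const.indicator (negfl_measurable m)).aemeasurable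
    _ = ∑' m, ρ {y : Euc d | negfl y = m} * G m := by
        refine tsum_congr fun m => ?_
        rw [lintegral_indicator_const (negfl_measurable m), mul_comm]

lemma myLp_samples_le {J : Type*} {X : J → Euc d} {N : ℕ}
    (hN : ∀ (k : Fin d → ℤ) (s : Finset J), (∀ j ∈ s, zfloor (X j) = k) → s.card ≤ N)
    {p : ℝ≥0∞} (hp : 1 ≤ p) {f : Euc d → ℂ} (hf : Continuous f) (ρ : Measure (Euc d)) :
    myLp p (fun j => ∫⁻ y, (‖f (X j - y)‖₊ : ℝ≥0∞) ∂ρ) ≤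
      ((N : ℝ≥0∞) + 1) * 2 ^ d * ρ Set.univ * myLp p (cubeSup f) := by
  classical
  set H : (Fin d → ℤ) → ℝ≥0∞ := fun k =>
    ∑' m, ρ {y : Euc d | negfl y = m} * ∑ e : Fin d → Fin 2, cubeSup f (k + m + ecast e)
    with hH
  have step1 : myLp p (fun j => ∫⁻ y, (‖f (X j - y)‖₊ : ℝ≥0∞) ∂ρ)
      ≤ myLp p (fun j => H (zfloor (X j))) :=
    myLp_mono fun j => lintegral_conv_le_H hf ρ (X j)
  have step2 : myLp p (fun j => H (zfloor (X j))) ≤ ((N : ℝ≥0∞) + 1) * myLp p H :=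
    myLp_fiber_le hN hp H
  have step3 : myLp p H ≤ 2 ^ d * ρ Set.univ * myLp p (cubeSup f) := by
    have hHeq : ∀ k, H k = ∑' m, ∑ e : Fin d → Fin 2,
        ρ {y : Euc d | negfl y = m} * cubeSup f (k + m + ecast e) := by
      intro k
      refine tsum_congr fun m => ?_
      rw [Finset.mul_sum]
    calc myLp p H
        = myLp p (fun k => ∑' m, ∑ e : Fin d → Fin 2,
            ρ {y : Euc d | negfl y = m} * cubeSup f (k + m + ecast e)) := by
          refine congrArg (myLp p) (funext fun k => hHeq k)
      _ ≤ ∑' m, myLp p (fun k => ∑ e : Fin d → Fin 2,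
            ρ {y : Euc d | negfl y = m} * cubeSup f (k + m + ecast e)) :=
          myLp_tsum_le hp _
      _ ≤ ∑' m, ∑ e : Fin d → Fin 2, myLp p (fun k =>
            ρ {y : Euc d | negfl y = m} * cubeSup f (k + m + ecast e)) :=
          ENNReal.tsum_le_tsum fun m => myLp_sum_le hp _
      _ = ∑' m, ∑ e : Fin d → Fin 2, ρ {y : Euc d | negfl y = m} * myLp p (cubeSup f) := by
          refine tsum_congr fun m => Finset.sum_congr rfl fun e _ => ?_
          rw [myLp_const_mul hp]
          congr 1
          have hfn : (fun k => cubeSup f (k + m + ecast e))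
              = (fun k => cubeSup f ((Equiv.addRight (m + ecast e)) k)) := by
            funext k
            simp only [Equiv.coe_addRight]
            rw [add_assoc]
          rw [hfn, myLp_comp_equiv (cubeSup f) (Equiv.addRight (m + ecast e))]
      _ = (∑' m, ρ {y : Euc d | negfl y = m}) * (2 ^ d * myLp p (cubeSup f)) := by
          rw [← ENNReal.tsum_mul_right]
          refine tsum_congr fun m => ?_
          rw [Finset.sum_const, Finset.card_univ]
          have hcard : Fintype.card (Fin d → Fin 2) = 2 ^ d := by
            simp [Fintype.card_fun]
          rw [hcard, nsmul_eq_mul]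
          push_cast
          ring
      _ ≤ ρ Set.univ * (2 ^ d * myLp p (cubeSup f)) := by
          refine mul_le_mul_left ?_ _
          rw [← measure_iUnion negfl_disjoint negfl_measurable]
          exact measure_mono (Set.subset_univ _)
      _ = 2 ^ d * ρ Set.univ * myLp p (cubeSup f) := by ring
  calc myLp p (fun j => ∫⁻ y, (‖f (X j - y)‖₊ : ℝ≥0∞) ∂ρ)
      ≤ ((N : ℝ≥0∞) + 1) * myLp p H := le_trans step1 step2
    _ ≤ ((N : ℝ≥0∞) + 1) * (2 ^ d * ρ Set.univ * myLp p (cubeSup f)) :=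
        mul_le_mul_right step3 _
    _ = ((N : ℝ≥0∞) + 1) * 2 ^ d * ρ Set.univ * myLp p (cubeSup f) := by ring

/-- sampling values of a convolution with an arbitrary complex measure are controlled
by the total variation of the measure and the amalgam norm. -/
lemma samples_pert_le {J : Type*} {X : J → Euc d} {N : ℕ}
    (hN : ∀ (k : Fin d → ℤ) (s : Finset J), (∀ j ∈ s, zfloor (X j) = k) → s.card ≤ N)
    {p : ℝ≥0∞} (hp : 1 ≤ p) {f : Euc d → ℂ} (hf : Continuous f)
    (ν : ComplexMeasure (Euc d)) :
    lpNorm p (fun j => mconv ν f (X j)) ≤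
      4 * (((N : ℝ≥0∞) + 1) * 2 ^ d) * (cmNorm ν * WNorm p f) := by
  rw [lpNorm_eq_myLp, WNorm_eq_myLp]
  set ρ₁ := (ComplexMeasure.re ν).toJordanDecomposition.posPart with hρ₁
  set ρ₂ := (ComplexMeasure.re ν).toJordanDecomposition.negPart with hρ₂
  set ρ₃ := (ComplexMeasure.im ν).toJordanDecomposition.posPart with hρ₃
  set ρ₄ := (ComplexMeasure.im ν).toJordanDecomposition.negPart with hρ₄
  set g : Measure (Euc d) → J → ℝ≥0∞ :=
    fun ρ j => ∫⁻ y, (‖f (X j - y)‖₊ : ℝ≥0∞) ∂ρ with hg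
  have hbound : ∀ ρ : Measure (Euc d), ρ Set.univ ≤ cmNorm ν →
      myLp p (g ρ) ≤ (((N : ℝ≥0∞) + 1) * 2 ^ d) * (cmNorm ν * myLp p (cubeSup f)) := by
    intro ρ hρ
    calc myLp p (g ρ) ≤ ((N : ℝ≥0∞) + 1) * 2 ^ d * ρ Set.univ * myLp p (cubeSup f) :=
          myLp_samples_le hN hp hf ρ
      _ ≤ ((N : ℝ≥0∞) + 1) * 2 ^ d * cmNorm ν * myLp p (cubeSup f) := by
          gcongr
      _ = (((N : ℝ≥0∞) + 1) * 2 ^ d) * (cmNorm ν * myLp p (cubeSup f)) := by ring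
  calc myLp p (fun j => (‖mconv ν f (X j)‖₊ : ℝ≥0∞))
      ≤ myLp p (fun j => (g ρ₁ j + g ρ₂ j + g ρ₃ j) + g ρ₄ j) :=
        myLp_mono fun j => mconv_nnnorm_le ν f (X j)
    _ ≤ (myLp p (fun j => g ρ₁ j + g ρ₂ j + g ρ₃ j) + myLp p (g ρ₄)) :=
        myLp_add_le hp _ _
    _ ≤ ((myLp p (fun j => g ρ₁ j + g ρ₂ j) + myLp p (g ρ₃)) + myLp p (g ρ₄)) := by
        gcongr
        exact myLp_add_le hp _ _
    _ ≤ (((myLp p (g ρ₁) + myLp p (g ρ₂)) + myLp p (g ρ₃)) + myLp p (g ρ₄)) := by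
        gcongr
        exact myLp_add_le hp _ _
    _ ≤ 4 * (((N : ℝ≥0∞) + 1) * 2 ^ d) * (cmNorm ν * myLp p (cubeSup f)) := by
        have h1 := hbound ρ₁ (jordan_re_posPart_univ_le ν)
        have h2 := hbound ρ₂ (jordan_re_negPart_univ_le ν)
        have h3 := hbound ρ₃ (jordan_im_posPart_univ_le ν)
        have h4 := hbound ρ₄ (jordan_im_negPart_univ_le ν)
        calc ((myLp p (g ρ₁) + myLp p (g ρ₂)) + myLp p (g ρ₃)) + myLp p (g ρ₄)
            ≤ ((((N : ℝ≥0∞) + 1) * 2 ^ d) * (cmNorm ν * myLp p (cubeSup f))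
              + (((N : ℝ≥0∞) + 1) * 2 ^ d) * (cmNorm ν * myLp p (cubeSup f))
              + (((N : ℝ≥0∞) + 1) * 2 ^ d) * (cmNorm ν * myLp p (cubeSup f))
              + (((N : ℝ≥0∞) + 1) * 2 ^ d) * (cmNorm ν * myLp p (cubeSup f))) := by
              gcongr
          _ = 4 * (((N : ℝ≥0∞) + 1) * 2 ^ d) * (cmNorm ν * myLp p (cubeSup f)) := by
              ring

lemma nnnorm_le_wnorm {p : ℝ≥0∞} (hp : 1 ≤ p) {f : Euc d → ℂ} (hf : Continuous f)
    (x : Euc d) : (‖f x‖₊ : ℝ≥0∞) ≤ WNorm p f := by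
  refine le_trans (nnnorm_le_cubeSup hf (k := zfloor x) (fun j => ⟨?_, ?_⟩))
    (cubeSup_le_wnorm hp f _)
  · show (0:ℝ) ≤ x j - ((⌊x j⌋ : ℤ) : ℝ)
    linarith [Int.floor_le (x j)]
  · show x j - ((⌊x j⌋ : ℤ) : ℝ) ≤ 1
    linarith [Int.lt_floor_add_one (x j)]
end StabilityAux

open MeasureTheory ENNReal in
/-- Theorem 3.3: stability of sampling under perturbation of the
sampling measures. -/
theorem stability_under_measure_perturbation
    (d r t : ℕ) (p : ℝ≥0∞) (hp : 1 ≤ p) (J : Type) [Countable J]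
    (μ : Fin t → ComplexMeasure (Euc d))
    (Φ : Fin r → Euc d → ℂ) (hΦ : ∀ i, MemW01 (Φ i)) (hR : RieszCond p Φ)
    (X : J → Euc d) (hsep : SeparatedSet X)
    (hsamp : SamplingSet p Φ μ X) :
    ∃ ε₀ : ℝ, 0 < ε₀ ∧ ∀ α : Fin t → ComplexMeasure (Euc d),
      cmNormVec (fun l => μ l - α l) < ENNReal.ofReal ε₀ →
      SamplingSet p Φ α X := by
  classical
  obtain ⟨m, M, hm0, hmM, hRiesz⟩ := hR
  obtain ⟨A, B, hA0, hAB, hsampAB⟩ := hsamp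
  obtain ⟨δ, hδ0, hδsep⟩ := hsep
  obtain ⟨N, hN⟩ := packing hδ0 hδsep
  have hΦW : ∀ i, WNorm 1 (Φ i) ≠ ∞ := fun i => (hΦ i).2.ne
  set WΦ : ℝ≥0∞ := ∑ i, WNorm 1 (Φ i) with hWΦ
  have hWΦfin : WΦ ≠ ∞ := by
    rw [hWΦ]
    exact (ENNReal.sum_lt_top.mpr fun i _ => (hΦ i).2).ne
  have hom0 : ENNReal.ofReal m ≠ 0 := by
    simp only [ne_eq, ENNReal.ofReal_eq_zero, not_le]
    exact hm0
  have hinvfin : (ENNReal.ofReal m)⁻¹ ≠ ∞ := by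
    simp only [ne_eq, ENNReal.inv_eq_top]
    exact hom0
  set K : ℝ≥0∞ := 4 * (((N : ℝ≥0∞) + 1) * 2 ^ d) * (WΦ * (ENNReal.ofReal m)⁻¹) with hK
  have hKfin : K ≠ ∞ := by
    rw [hK]
    refine ENNReal.mul_ne_top (ENNReal.mul_ne_top (by simp) ?_) ?_
    · refine ENNReal.mul_ne_top (by simp) ?_
      simp [ENNReal.pow_ne_top]
    · exact ENNReal.mul_ne_top hWΦfin hinvfin
  set ε₀ : ℝ := A / (2 * (K.toReal + 1)) with hε₀
  have hKt : (0:ℝ) < K.toReal + 1 := by positivity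
  have hε₀pos : 0 < ε₀ := by rw [hε₀]; positivity
  refine ⟨ε₀, hε₀pos, fun α hα => ?_⟩
  refine ⟨A / 2, B + A, by positivity, by linarith, fun C hC => ?_⟩
  set ν : Fin t → ComplexMeasure (Euc d) := fun l => μ l - α l with hνdef
  set f := genFun Φ C with hfdef
  obtain ⟨hlow, hupp⟩ := hRiesz C hC
  set e := eLpNorm f p volume with hedef
  have hefin : e ≠ ∞ := by
    refine (lt_of_le_of_lt hupp ?_).ne
    exact ENNReal.mul_lt_top ENNReal.ofReal_lt_top hC
  -- coefficients are bounded
  have hCb : ∀ i k, (‖C i k‖₊ : ℝ≥0∞) ≤ vlpNorm p C := by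
    intro i k
    calc (‖C i k‖₊ : ℝ≥0∞) ≤ lpNorm p (C i) := by
          rw [lpNorm_eq_myLp]
          exact le_myLp hp _ k
      _ ≤ vlpNorm p C := Finset.single_le_sum (f := fun i => lpNorm p (C i))
          (fun _ _ => zero_le) (Finset.mem_univ i)
  -- continuity of f
  have hfc : Continuous f := by
    refine genFun_continuous Φ C (fun i => (hΦ i).1) hΦW
      (b := (vlpNorm p C).toNNReal) (fun i k => ?_)
    rw [← ENNReal.coe_le_coe, ENNReal.coe_toNNReal hC.ne]
    exact hCb i k
  -- amalgam norm bound
  have hvlp_le : vlpNorm p C ≤ (ENNReal.ofReal m)⁻¹ * e := by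
    calc vlpNorm p C = (ENNReal.ofReal m)⁻¹ * (ENNReal.ofReal m * vlpNorm p C) := by
          rw [← mul_assoc, ENNReal.inv_mul_cancel hom0 ENNReal.ofReal_ne_top, one_mul]
      _ ≤ (ENNReal.ofReal m)⁻¹ * e := mul_le_mul_right hlow _
  have hWf : WNorm p f ≤ (WΦ * (ENNReal.ofReal m)⁻¹) * e := by
    calc WNorm p f ≤ ∑ i, WNorm 1 (Φ i) * lpNorm p (C i) := wnorm_genFun_le hp Φ C
      _ ≤ ∑ i, WNorm 1 (Φ i) * vlpNorm p C := by
          refine Finset.sum_le_sum fun i _ => mul_le_mul_right ?_ _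
          exact Finset.single_le_sum (f := fun i => lpNorm p (C i))
            (fun _ _ => zero_le) (Finset.mem_univ i)
      _ = WΦ * vlpNorm p C := by rw [hWΦ, Finset.sum_mul]
      _ ≤ WΦ * ((ENNReal.ofReal m)⁻¹ * e) := mul_le_mul_right hvlp_le _
      _ = (WΦ * (ENNReal.ofReal m)⁻¹) * e := by ring
  have hWffin : WNorm p f ≠ ∞ := by
    refine (lt_of_le_of_lt hWf ?_).ne
    exact ENNReal.mul_lt_top
      (ENNReal.mul_lt_top hWΦfin.lt_top hinvfin.lt_top) hefin.lt_top
  -- boundedness of f and integrability of translates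
  have hBf : ∀ x, ‖f x‖ ≤ (WNorm p f).toReal := by
    intro x
    have h1 := nnnorm_le_wnorm hp hfc x
    have := ENNReal.toReal_mono hWffin h1
    simpa using this
  have hint : ∀ x : Euc d, ∀ ρ : Measure (Euc d), IsFiniteMeasure ρ →
      Integrable (fun y => f (x - y)) ρ := by
    intro x ρ hρ
    haveI := hρ
    exact integrable_of_bounded_cont (hfc.comp (continuous_const.sub continuous_id))
      (fun y => hBf (x - y)) ρ
  -- decomposition μ = ν + α
  have hmconv_add : ∀ (l : Fin t) (x : Euc d),
      mconv (μ l) f x = mconv (ν l) f x + mconv (α l) f x := by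
    intro l x
    have hsum : μ l = ν l + α l := by
      show μ l = μ l - α l + α l
      rw [sub_add_cancel]
    show cInt (μ l) (fun y => f (x - y)) = _
    rw [hsum, cInt_add _ _ (hint x)]
    rfl
  -- perturbation estimate
  have hpert : ∀ l : Fin t, lpNorm p (fun j => mconv (ν l) f (X j)) ≤
      K * (cmNorm (ν l) * e) := by
    intro l
    calc lpNorm p (fun j => mconv (ν l) f (X j))
        ≤ 4 * (((N : ℝ≥0∞) + 1) * 2 ^ d) * (cmNorm (ν l) * WNorm p f) :=
          samples_pert_le hN hp hfc (ν l)
      _ ≤ 4 * (((N : ℝ≥0∞) + 1) * 2 ^ d) *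
            (cmNorm (ν l) * ((WΦ * (ENNReal.ofReal m)⁻¹) * e)) := by
          gcongr
      _ = K * (cmNorm (ν l) * e) := by rw [hK]; ring
  have hνsum : ∑ l, lpNorm p (fun j => mconv (ν l) f (X j)) ≤ K * cmNormVec ν * e := by
    calc ∑ l, lpNorm p (fun j => mconv (ν l) f (X j))
        ≤ ∑ l, K * (cmNorm (ν l) * e) := Finset.sum_le_sum fun l _ => hpert l
      _ = K * (∑ l, cmNorm (ν l)) * e := by
          rw [Finset.mul_sum, Finset.sum_mul]
          refine Finset.sum_congr rfl fun l _ => by ring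
      _ = K * cmNormVec ν * e := rfl
  have hsmall : K * cmNormVec ν * e ≤ ENNReal.ofReal (A / 2) * e := by
    refine mul_le_mul_left ?_ e
    calc K * cmNormVec ν ≤ K * ENNReal.ofReal ε₀ := mul_le_mul_right hα.le _
      _ ≤ ENNReal.ofReal (K.toReal + 1) * ENNReal.ofReal ε₀ := by
          refine mul_le_mul_left ?_ _
          calc K = ENNReal.ofReal K.toReal := (ENNReal.ofReal_toReal hKfin).symm
            _ ≤ ENNReal.ofReal (K.toReal + 1) := ENNReal.ofReal_le_ofReal (by linarith)
      _ = ENNReal.ofReal ((K.toReal + 1) * ε₀) :=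
          (ENNReal.ofReal_mul (by positivity)).symm
      _ ≤ ENNReal.ofReal (A / 2) := by
          refine ENNReal.ofReal_le_ofReal ?_
          rw [hε₀]
          rw [show (K.toReal + 1) * (A / (2 * (K.toReal + 1))) = A / 2 by
            field_simp]
  have hνbound : ∑ l, lpNorm p (fun j => mconv (ν l) f (X j)) ≤
      ENNReal.ofReal (A / 2) * e := le_trans hνsum hsmall
  obtain ⟨hsampL, hsampU⟩ := hsampAB C hC
  constructor
  · -- lower bound
    have h1 : ENNReal.ofReal A * e ≤
        ∑ l, lpNorm p (fun j => mconv (ν l) f (X j)) +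
        ∑ l, lpNorm p (fun j => mconv (α l) f (X j)) := by
      refine le_trans hsampL ?_
      rw [← Finset.sum_add_distrib]
      refine Finset.sum_le_sum fun l _ => ?_
      rw [lpNorm_eq_myLp, lpNorm_eq_myLp, lpNorm_eq_myLp]
      refine le_trans (myLp_mono fun j => ?_) (myLp_add_le hp _ _)
      rw [hmconv_add l (X j)]
      exact_mod_cast nnnorm_add_le _ _
    have h2 : ENNReal.ofReal A * e ≤
        ENNReal.ofReal (A / 2) * e + ∑ l, lpNorm p (fun j => mconv (α l) f (X j)) :=
      le_trans h1 (add_le_add hνbound le_rfl)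
    have hsplit : ENNReal.ofReal A * e
        = ENNReal.ofReal (A / 2) * e + ENNReal.ofReal (A / 2) * e := by
      rw [← add_mul, ← ENNReal.ofReal_add (by positivity) (by positivity)]
      norm_num
    rw [hsplit] at h2
    have hfin2 : ENNReal.ofReal (A / 2) * e ≠ ∞ :=
      ENNReal.mul_ne_top ENNReal.ofReal_ne_top hefin
    exact (ENNReal.add_le_add_iff_left hfin2).mp h2
  · -- upper bound
    calc ∑ l, lpNorm p (fun j => mconv (α l) f (X j))
        ≤ ∑ l, (lpNorm p (fun j => mconv (μ l) f (X j)) +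
            lpNorm p (fun j => mconv (ν l) f (X j))) := by
          refine Finset.sum_le_sum fun l _ => ?_
          rw [lpNorm_eq_myLp, lpNorm_eq_myLp, lpNorm_eq_myLp]
          refine le_trans (myLp_mono fun j => ?_) (myLp_add_le hp _ _)
          have hαeq : mconv (α l) f (X j) = mconv (μ l) f (X j) - mconv (ν l) f (X j) := by
            rw [hmconv_add l (X j)]; ring
          rw [hαeq]
          exact_mod_cast nnnorm_sub_le _ _
      _ = ∑ l, lpNorm p (fun j => mconv (μ l) f (X j)) +
          ∑ l, lpNorm p (fun j => mconv (ν l) f (X j)) := Finset.sum_add_distrib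
      _ ≤ ENNReal.ofReal B * e + ENNReal.ofReal (A / 2) * e :=
          add_le_add hsampU hνbound
      _ ≤ ENNReal.ofReal (B + A) * e := by
          rw [← add_mul]
          refine mul_le_mul_left ?_ _
          rw [← ENNReal.ofReal_add (by linarith) (by positivity)]
          exact ENNReal.ofReal_le_ofReal (by linarith)
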